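/- Let X(t) be a symmetric truncated birth-death process on {0,1,...,2s} with absorbing endpoints 0 and 2s. Then for k, n both in {1,...,s−1} or both in {s+1,...,2s−1}, the s-avoiding transition probability satisfies p^⟨s⟩_{k,n}(t) = p_{k,n}(t) − (x_k/x_s) p_{2s−k,n}(t) for all t ≥ 0. -/

import Mathlib

/-- `p` is a solution of the forward Kolmogorov equations of the truncated
birth-death process on `{0,…,N}` with absorbing endpoints `0` and `N`. -/
def IsAbsorbingBDSolution (N : ℕ) (lam mu : ℕ → ℝ) (p : ℕ → ℕ → ℝ → ℝ) : Prop :=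
  (∀ k t, HasDerivAt (p k 0) (mu 1 * p k 1 t) t) ∧
  (∀ k n, 1 ≤ n → n ≤ N - 1 → ∀ t, HasDerivAt (p k n)
      (lam (n-1) * p k (n-1) t - (lam n + mu n) * p k n t + mu (n+1) * p k (n+1) t) t) ∧
  (∀ k n, p k n 0 = if k = n then 1 else 0)

theorem avoiding_transition_probability_absorbing
    (s : ℕ) (hs : 1 < s) (lam mu : ℕ → ℝ)
    (hlam0 : lam 0 = 0) (hmu0 : mu 0 = 0) (hlamN : lam (2*s) = 0) (hmuN : mu (2*s) = 0)
    (hpos : ∀ n, 1 ≤ n → n ≤ 2*s - 1 → 0 < lam n ∧ 0 < mu n)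
    (p : ℕ → ℕ → ℝ → ℝ)
    (hsol : IsAbsorbingBDSolution (2*s) lam mu p)
    (x : ℕ → ℝ) (hx0 : x 0 = 1)
    (hxrec : ∀ n, 1 ≤ n → n ≤ 2*s - 1 → x n = (mu n / lam (2*s - n)) * x (n - 1))
    -- the process is symmetric:
    (hsymm : ∀ k n, 1 ≤ k → k ≤ 2*s - 1 → n ≤ 2*s → ∀ t, 0 ≤ t →
      p (2*s - k) (2*s - n) t = (x n / x k) * p k n t)
    (k n : ℕ)
    (hside : (1 ≤ k ∧ k ≤ s - 1 ∧ 1 ≤ n ∧ n ≤ s - 1) ∨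
             (s + 1 ≤ k ∧ k ≤ 2*s - 1 ∧ s + 1 ≤ n ∧ n ≤ 2*s - 1))
    (g : ℝ → ℝ)
    -- `g` is the FPT density from `k` through `s`, via the renewal equation
    -- (upward if `k < s`, downward if `k > s`):
    (hgup : k < s → ∀ m, s ≤ m → m ≤ 2*s → ∀ t, 0 ≤ t →
      p k m t = ∫ θ in (0:ℝ)..t, g θ * p s m (t - θ))
    (hgdown : s < k → ∀ m, m ≤ s → ∀ t, 0 ≤ t →
      p k m t = ∫ θ in (0:ℝ)..t, g θ * p s m (t - θ))
    (pav : ℝ → ℝ)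
    -- the `s`-avoiding transition probability:
    (hpav : ∀ t, 0 ≤ t → pav t = p k n t - ∫ θ in (0:ℝ)..t, g θ * p s n (t - θ)) :
    ∀ t, 0 ≤ t → pav t = p k n t - (x k / x s) * p (2*s - k) n t := by
  intro t ht
  have hxpos : ∀ m, m ≤ 2*s - 1 → 0 < x m := by
    intro m
    induction m with
    | zero => intro _; rw [hx0]; norm_num
    | succ m ih =>
      intro hm
      have h1 : 1 ≤ m + 1 := by omega
      rw [hxrec (m+1) h1 hm]
      have hmu := (hpos (m+1) h1 hm).2
      have hlam : 0 < lam (2*s - (m+1)) := (hpos (2*s - (m+1)) (by omega) (by omega)).1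
      have hx := ih (by omega)
      simp only [Nat.add_sub_cancel]
      positivity
  have hk1 : 1 ≤ k := by rcases hside with h | h <;> omega
  have hk2 : k ≤ 2*s - 1 := by rcases hside with h | h <;> omega
  have hn1 : 1 ≤ n := by rcases hside with h | h <;> omega
  have hn2 : n ≤ 2*s - 1 := by rcases hside with h | h <;> omega
  have hxk : x k ≠ 0 := (hxpos k hk2).ne'
  have hxs : x s ≠ 0 := (hxpos s (by omega)).ne'
  have hA : p (2*s - k) n t = (x (2*s - n) / x k) * p k (2*s - n) t := by
    have h := hsymm k (2*s - n) hk1 hk2 (by omega) t ht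
    rwa [show 2*s - (2*s - n) = n by omega] at h
  have hsym2 : ∀ τ, 0 ≤ τ → p s n τ = (x (2*s - n) / x s) * p s (2*s - n) τ := by
    intro τ hτ
    have h := hsymm s (2*s - n) (by omega) (by omega) (by omega) τ hτ
    rwa [show 2*s - s = s by omega, show 2*s - (2*s - n) = n by omega] at h
  have hren : p k (2*s - n) t = ∫ θ in (0:ℝ)..t, g θ * p s (2*s - n) (t - θ) := by
    rcases hside with ⟨h1, h2, h3, h4⟩ | ⟨h1, h2, h3, h4⟩
    · exact hgup (by omega) (2*s - n) (by omega) (by omega) t ht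
    · exact hgdown (by omega) (2*s - n) (by omega) t ht
  have key : (x k / x s) * p (2*s - k) n t = ∫ θ in (0:ℝ)..t, g θ * p s n (t - θ) := by
    rw [hA, hren]
    calc x k / x s * (x (2*s - n) / x k * ∫ θ in (0:ℝ)..t, g θ * p s (2*s - n) (t - θ))
        = (x (2*s - n) / x s) * ∫ θ in (0:ℝ)..t, g θ * p s (2*s - n) (t - θ) := by
          field_simp
      _ = ∫ θ in (0:ℝ)..t, (x (2*s - n) / x s) * (g θ * p s (2*s - n) (t - θ)) :=
          (intervalIntegral.integral_const_mul _ _).symm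
      _ = ∫ θ in (0:ℝ)..t, g θ * p s n (t - θ) := by
          apply intervalIntegral.integral_congr
          intro θ hθ
          rw [Set.uIcc_of_le ht] at hθ
          have htθ : 0 ≤ t - θ := by
            have := hθ.2
            linarith
          show x (2*s - n) / x s * (g θ * p s (2*s - n) (t - θ)) = g θ * p s n (t - θ)
          rw [hsym2 (t - θ) htθ]
          ring
  rw [hpav t ht]
  linarith [key]
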